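/- Let z_1, …, z_N be nonzero complex numbers with Z ≥ 1 of them inside the open unit disk, set A = Σ_{|z_n|<1} ((|z_n|²−1)/2 − log|z_n|) and T = Σ_{|z_n|<1}(−log|z_n|), and assume A < 1. Then T²/Z ≤ A (1 + (2/3)·√A/(1 − √A)). -/

import Mathlib

open Real Finset

/-- If `f 0 = 0` and `f' ≥ 0` on `(0,∞)`, then `f ≥ 0` on `[0,∞)`. -/
lemma nonneg_of_deriv_nonneg {f f' : ℝ → ℝ} (hf : ∀ y, HasDerivAt f (f' y) y)
    (h0 : f 0 = 0) (hf' : ∀ y, 0 < y → 0 ≤ f' y) {x : ℝ} (hx : 0 ≤ x) : 0 ≤ f x := by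
  have hm : MonotoneOn f (Set.Ici 0) := by
    apply monotoneOn_of_deriv_nonneg (convex_Ici 0)
    · exact fun y _ => (hf y).continuousAt.continuousWithinAt
    · exact fun y _ => (hf y).differentiableAt.differentiableWithinAt
    · intro y hy
      rw [interior_Ici] at hy
      rw [(hf y).deriv]
      exact hf' y hy
  have := hm Set.self_mem_Ici hx hx
  linarith [h0 ▸ this]

lemma expNeg_hasDerivAt (y : ℝ) : HasDerivAt (fun y : ℝ => Real.exp (-y)) (-Real.exp (-y)) y := by
  simpa [Function.comp_def] using (Real.hasDerivAt_exp (-y)).comp y ((hasDerivAt_id y).neg)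

lemma expNeg_L2 {x : ℝ} (hx : 0 ≤ x) : Real.exp (-x) ≤ 1 - x + x ^ 2 / 2 := by
  have key : 0 ≤ 1 - x + x ^ 2 / 2 - Real.exp (-x) := by
    apply nonneg_of_deriv_nonneg (f' := fun y => -1 + y + Real.exp (-y)) _ (by simp) _ hx
    · intro y
      have h1 := (((hasDerivAt_const y (1:ℝ)).sub (hasDerivAt_id y)).add
        ((hasDerivAt_pow 2 y).div_const 2)).sub (expNeg_hasDerivAt y)
      exact h1.congr_deriv (by norm_num)
    · intro y _
      have := Real.add_one_le_exp (-y)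
      linarith
  linarith

lemma expNeg_L3 {x : ℝ} (hx : 0 ≤ x) :
    1 - x + x ^ 2 / 2 - x ^ 3 / 6 ≤ Real.exp (-x) := by
  have key : 0 ≤ Real.exp (-x) - (1 - x + x ^ 2 / 2 - x ^ 3 / 6) := by
    apply nonneg_of_deriv_nonneg
      (f' := fun y => 1 - y + y ^ 2 / 2 - Real.exp (-y)) _ (by simp) _ hx
    · intro y
      have h1 := (expNeg_hasDerivAt y).sub
        ((((hasDerivAt_const y (1:ℝ)).sub (hasDerivAt_id y)).add
          ((hasDerivAt_pow 2 y).div_const 2)).sub ((hasDerivAt_pow 3 y).div_const 6))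
      exact h1.congr_deriv (by norm_num; ring)
    · intro y hy
      have := expNeg_L2 hy.le
      linarith
  linarith

lemma expNeg_L4 {x : ℝ} (hx : 0 ≤ x) :
    Real.exp (-x) ≤ 1 - x + x ^ 2 / 2 - x ^ 3 / 6 + x ^ 4 / 24 := by
  have key : 0 ≤ 1 - x + x ^ 2 / 2 - x ^ 3 / 6 + x ^ 4 / 24 - Real.exp (-x) := by
    apply nonneg_of_deriv_nonneg
      (f' := fun y => -(1 - y + y ^ 2 / 2 - y ^ 3 / 6) + Real.exp (-y)) _ (by simp) _ hx
    · intro y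
      have h1 := ((((((hasDerivAt_const y (1:ℝ)).sub (hasDerivAt_id y)).add
        ((hasDerivAt_pow 2 y).div_const 2)).sub ((hasDerivAt_pow 3 y).div_const 6)).add
        ((hasDerivAt_pow 4 y).div_const 24)).sub (expNeg_hasDerivAt y))
      exact h1.congr_deriv (by norm_num; ring)
    · intro y hy
      have := expNeg_L3 hy.le
      linarith
  linarith

lemma expNeg_L5 {x : ℝ} (hx : 0 ≤ x) :
    1 - x + x ^ 2 / 2 - x ^ 3 / 6 + x ^ 4 / 24 - x ^ 5 / 120 ≤ Real.exp (-x) := by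
  have key : 0 ≤ Real.exp (-x) -
      (1 - x + x ^ 2 / 2 - x ^ 3 / 6 + x ^ 4 / 24 - x ^ 5 / 120) := by
    apply nonneg_of_deriv_nonneg
      (f' := fun y => 1 - y + y ^ 2 / 2 - y ^ 3 / 6 + y ^ 4 / 24 - Real.exp (-y)) _ (by simp) _ hx
    · intro y
      have h1 := (expNeg_hasDerivAt y).sub
        (((((((hasDerivAt_const y (1:ℝ)).sub (hasDerivAt_id y)).add
          ((hasDerivAt_pow 2 y).div_const 2)).sub ((hasDerivAt_pow 3 y).div_const 6)).add
          ((hasDerivAt_pow 4 y).div_const 24)).sub ((hasDerivAt_pow 5 y).div_const 120)))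
      exact h1.congr_deriv (by norm_num; ring)
    · intro y hy
      have := expNeg_L4 hy.le
      linarith
  linarith

set_option maxHeartbeats 1000000 in
/-- Core elementary inequality in the variables `t > 0` and `s = √a`. -/
lemma core_st {t s : ℝ} (ht : 0 < t) (ht' : t < 3 / 2) (hs0 : 0 ≤ s) (hs1 : s < 1)
    (h1 : s ^ 2 ≤ t ^ 2) (h2 : t - t ^ 2 / 3 ≤ s)
    (h3 : t ^ 2 - 2 / 3 * t ^ 3 + t ^ 4 / 9 ≤ s ^ 2) (h7 : t - 1 / 2 ≤ s ^ 2) :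
    t ^ 2 - s ^ 2 ≤ s * (t ^ 2 - s ^ 2 / 3) := by
  have hu0 : 0 ≤ t - t ^ 2 / 3 := by nlinarith [mul_pos ht (show (0:ℝ) < 3 - t by linarith)]
  have hut : t - t ^ 2 / 3 ≤ t := by nlinarith [sq_nonneg t]
  have hst : s ≤ t := by nlinarith
  rcases le_or_gt t (114 / 100) with hc | hc
  · -- small t : use s ≥ t - t²/3 and s² ≥ t² - (2/3)t³ + t⁴/9
    have key1 : 0 ≤ (s - (t - t ^ 2 / 3)) *
        (t ^ 2 - (s ^ 2 + s * (t - t ^ 2 / 3) + (t - t ^ 2 / 3) ^ 2) / 3) := by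
      apply mul_nonneg (by linarith)
      have hsu : s * (t - t ^ 2 / 3) ≤ t * t :=
        mul_le_mul hst hut hu0 ht.le
      have huu : (t - t ^ 2 / 3) ^ 2 ≤ t ^ 2 := by nlinarith
      linarith [h1, hsu, huu]
    have key2 : 0 ≤ t ^ 4 / 9 * (1 - t + t ^ 2 / 9) := by
      apply mul_nonneg (by positivity)
      nlinarith [sq_nonneg (t - 57 / 50)]
    linarith [key1, key2, h3]
  · -- large t : use s² ≥ t - 1/2 and s³ ≤ s
    have hcube : s ^ 3 ≤ s := by
      have := mul_nonneg hs0 (show 0 ≤ 1 - s ^ 2 by nlinarith)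
      nlinarith [this]
    have hfac2 : (0:ℝ) ≤ t ^ 2 - 1 / 3 := by nlinarith
    have hsu : 0 ≤ (s - (t - t ^ 2 / 3)) * (t ^ 2 - 1 / 3) :=
      mul_nonneg (by linarith) hfac2
    have hw0 : (0:ℝ) ≤ t - 114 / 100 := by linarith
    have hw1 : (0:ℝ) ≤ 3 / 2 - t := by linarith
    have hq : (0:ℝ) ≤ -t ^ 4 / 3 + t ^ 3 - 8 / 9 * t ^ 2 + 2 / 3 * t - 1 / 2 := by
      linarith [mul_nonneg hw0 hw1, mul_nonneg (mul_nonneg hw0 hw0) hw1,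
        mul_nonneg (mul_nonneg (mul_nonneg hw0 hw0) hw0) hw1]
    linarith [hq, hcube, h7, hsu]

/-- Per-term inequality in exponential form. -/
lemma core_a {t a : ℝ} (ht : 0 < t) (ha : a = (Real.exp (-(2 * t)) - 1) / 2 + t)
    (ha1 : a < 1) {S : ℝ} (hS : Real.sqrt a ≤ S) :
    t ^ 2 - a ≤ S * (t ^ 2 - a / 3) := by
  have h2t : (0:ℝ) ≤ 2 * t := by linarith
  have hE1 : 1 - 2 * t ≤ Real.exp (-(2 * t)) := by
    have := Real.add_one_le_exp (-(2 * t)); linarith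
  have hEpos : 0 < Real.exp (-(2 * t)) := Real.exp_pos _
  have ha0 : 0 ≤ a := by rw [ha]; linarith
  have hup : a ≤ t ^ 2 := by
    have := expNeg_L2 h2t
    rw [ha]; nlinarith
  have ht' : t < 3 / 2 := by rw [ha] at ha1; nlinarith
  have h7 : t - 1 / 2 ≤ a := by rw [ha]; nlinarith
  have h3 : t ^ 2 - 2 / 3 * t ^ 3 + t ^ 4 / 9 ≤ a := by
    have h5 := expNeg_L5 h2t
    rw [ha]
    nlinarith [mul_nonneg (mul_nonneg (mul_nonneg ht.le ht.le) ht.le) ht.le]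
  set s : ℝ := Real.sqrt a with hsdef
  have hs0 : 0 ≤ s := Real.sqrt_nonneg a
  have hs2 : s ^ 2 = a := Real.sq_sqrt ha0
  have hs1 : s < 1 := by
    rw [hsdef, ← Real.sqrt_one]
    exact Real.sqrt_lt_sqrt ha0 ha1
  have h2 : t - t ^ 2 / 3 ≤ s := by
    rw [hsdef, show t - t ^ 2 / 3 = √((t - t ^ 2 / 3) ^ 2) from
      (Real.sqrt_sq (by nlinarith [mul_pos ht (show (0:ℝ) < 3 - t by linarith)])).symm]
    exact Real.sqrt_le_sqrt (by nlinarith)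
  have hcore := core_st ht ht' hs0 hs1 (hs2 ▸ hup) h2 (hs2 ▸ h3) (hs2 ▸ h7)
  rw [hs2] at hcore
  have hfac : 0 ≤ t ^ 2 - a / 3 := by nlinarith
  calc t ^ 2 - a ≤ s * (t ^ 2 - a / 3) := hcore
    _ ≤ S * (t ^ 2 - a / 3) := mul_le_mul_of_nonneg_right hS hfac

/-- Per-term inequality for `r ∈ (0,1)`. -/
lemma per_term {r S : ℝ} (hr0 : 0 < r) (hr1 : r < 1)
    (ha1 : (r ^ 2 - 1) / 2 - Real.log r < 1)
    (hS : Real.sqrt ((r ^ 2 - 1) / 2 - Real.log r) ≤ S) :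
    (-Real.log r) ^ 2 - ((r ^ 2 - 1) / 2 - Real.log r) ≤
      S * ((-Real.log r) ^ 2 - ((r ^ 2 - 1) / 2 - Real.log r) / 3) := by
  have ht : 0 < -Real.log r := by
    have := Real.log_neg hr0 hr1; linarith
  refine core_a ht ?_ ha1 hS
  have hr2 : r ^ 2 = Real.exp (-(2 * -Real.log r)) := by
    rw [show -(2 * -Real.log r) = (2:ℕ) * Real.log r by push_cast; ring,
      Real.exp_nat_mul, Real.exp_log hr0]
  rw [hr2]; ring

theorem stmt15 (N : ℕ) (z : Fin N → ℂ) (hz : ∀ n, z n ≠ 0)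
    (hZ : 1 ≤ (Finset.univ.filter (fun n => ‖z n‖ < 1)).card)
    (hA : (∑ n ∈ Finset.univ.filter (fun n => ‖z n‖ < 1),
        (((‖z n‖) ^ 2 - 1) / 2 - Real.log (‖z n‖))) < 1) :
    (∑ n ∈ Finset.univ.filter (fun n => ‖z n‖ < 1),
        -Real.log (‖z n‖)) ^ 2 /
        ((Finset.univ.filter (fun n => ‖z n‖ < 1)).card : ℝ) ≤
      (∑ n ∈ Finset.univ.filter (fun n => ‖z n‖ < 1),
          (((‖z n‖) ^ 2 - 1) / 2 - Real.log (‖z n‖))) *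
        (1 + 2 / 3 *
          (Real.sqrt (∑ n ∈ Finset.univ.filter (fun n => ‖z n‖ < 1),
              (((‖z n‖) ^ 2 - 1) / 2 - Real.log (‖z n‖))) /
            (1 - Real.sqrt (∑ n ∈ Finset.univ.filter (fun n => ‖z n‖ < 1),
              (((‖z n‖) ^ 2 - 1) / 2 - Real.log (‖z n‖)))))) := by
  classical
  set F := Finset.univ.filter (fun n => ‖z n‖ < 1) with hF
  set A := ∑ n ∈ F, (((‖z n‖) ^ 2 - 1) / 2 - Real.log (‖z n‖)) with hAdef
  set T := ∑ n ∈ F, -Real.log (‖z n‖) with hTdef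
  set Q := ∑ n ∈ F, (-Real.log (‖z n‖)) ^ 2 with hQdef
  have hmem : ∀ n ∈ F, 0 < ‖z n‖ ∧ ‖z n‖ < 1 := by
    intro n hn
    rw [hF, Finset.mem_filter] at hn
    exact ⟨norm_pos_iff.mpr (hz n), hn.2⟩
  have hterm_pos : ∀ n ∈ F,
      0 < ((‖z n‖) ^ 2 - 1) / 2 - Real.log (‖z n‖) := by
    intro n hn
    obtain ⟨h0, h1⟩ := hmem n hn
    have hlog : Real.log (‖z n‖) < 0 := Real.log_neg h0 h1
    have hE : ‖z n‖ ^ 2 = Real.exp (2 * Real.log (‖z n‖)) := by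
      rw [show (2 : ℝ) * Real.log (‖z n‖)
          = (2:ℕ) * Real.log (‖z n‖) by push_cast; ring,
        Real.exp_nat_mul, Real.exp_log h0]
    have := Real.add_one_lt_exp (x := 2 * Real.log (‖z n‖)) (by linarith)
    rw [hE]; linarith
  have hA0 : 0 ≤ A := Finset.sum_nonneg fun n hn => (hterm_pos n hn).le
  set S := Real.sqrt A with hSdef
  have hS0 : 0 ≤ S := Real.sqrt_nonneg A
  have hS1 : S < 1 := by
    rw [hSdef, ← Real.sqrt_one]; exact Real.sqrt_lt_sqrt hA0 hA
  have hterm_le : ∀ n ∈ F,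
      ((‖z n‖) ^ 2 - 1) / 2 - Real.log (‖z n‖) ≤ A := by
    intro n hn
    exact Finset.single_le_sum (fun m hm => (hterm_pos m hm).le) hn
  have hkey : ∀ n ∈ F,
      (-Real.log (‖z n‖)) ^ 2
        - (((‖z n‖) ^ 2 - 1) / 2 - Real.log (‖z n‖)) ≤
      S * ((-Real.log (‖z n‖)) ^ 2
        - (((‖z n‖) ^ 2 - 1) / 2 - Real.log (‖z n‖)) / 3) := by
    intro n hn
    obtain ⟨h0, h1⟩ := hmem n hn
    refine per_term h0 h1 (lt_of_le_of_lt (hterm_le n hn) hA) ?_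
    rw [hSdef]
    exact Real.sqrt_le_sqrt (hterm_le n hn)
  have hsum : Q - A ≤ S * (Q - A / 3) := by
    calc Q - A = ∑ n ∈ F, ((-Real.log (‖z n‖)) ^ 2
          - (((‖z n‖) ^ 2 - 1) / 2 - Real.log (‖z n‖))) := by
          rw [Finset.sum_sub_distrib, ← hAdef, ← hQdef]
      _ ≤ ∑ n ∈ F, S * ((-Real.log (‖z n‖)) ^ 2
          - (((‖z n‖) ^ 2 - 1) / 2 - Real.log (‖z n‖)) / 3) :=
          Finset.sum_le_sum hkey
      _ = S * (Q - A / 3) := by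
          rw [← Finset.mul_sum, Finset.sum_sub_distrib, ← Finset.sum_div, ← hAdef, ← hQdef]
  have hQle : Q ≤ A * (1 - S / 3) / (1 - S) := by
    rw [le_div_iff₀ (by linarith)]
    nlinarith
  have hCS : T ^ 2 ≤ (F.card : ℝ) * Q := by
    rw [hTdef, hQdef]
    exact_mod_cast sq_sum_le_card_mul_sum_sq (s := F)
      (f := fun n => -Real.log (‖z n‖))
  have hZpos : (0:ℝ) < (F.card : ℝ) := by exact_mod_cast hZ
  have h1 : T ^ 2 / (F.card : ℝ) ≤ Q := by
    rw [div_le_iff₀ hZpos]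
    linarith [hCS]
  have hSne : (1:ℝ) - S ≠ 0 := by linarith
  have h2 : A * (1 - S / 3) / (1 - S) = A * (1 + 2 / 3 * (S / (1 - S))) := by
    rw [div_eq_iff hSne]
    field_simp
    ring
  calc T ^ 2 / (F.card : ℝ) ≤ Q := h1
    _ ≤ A * (1 - S / 3) / (1 - S) := hQle
    _ = A * (1 + 2 / 3 * (S / (1 - S))) := h2
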